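/- Simplification of the mdG(q) coefficient matrix: Let q ≥ 0, let s₀ < s₁ < ⋯ < s_q = 1 be distinct nodes in [0,1] with s_q = 1, and let λ₀, …, λ_q be the corresponding Lagrange basis polynomials of degree q (λ_n(s_m) = δ_{nm}). Define the (q+1)×(q+1) matrix A = (a_{mn})_{m,n=0}^{q} by a_{mn} = ∫₀¹ λ_n'(t) λ_m(t) dt + λ_n(0) λ_m(0). Then A is invertible, and its inverse Ā = (ā_{mn}) satisfies Σ_{n=0}^{q} ā_{mn} λ_n(0) = 1 for every m = 0,…,q. -/

import Mathlib

open MeasureTheory intervalIntegral Polynomial Finset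

/-- The Lagrange basis polynomial for nodes `s : Fin m → ℝ` associated with the node `n`:
`λ_n(x) = ∏_{k ≠ n} (x − s_k)/(s_n − s_k)`. -/
noncomputable def lagrangeBasis {m : ℕ} (s : Fin m → ℝ) (n : Fin m) : Polynomial ℝ :=
  ∏ k ∈ Finset.univ.erase n,
    Polynomial.C (s n - s k)⁻¹ * (Polynomial.X - Polynomial.C (s k))

lemma lagrangeBasis_eq {m : ℕ} (s : Fin m → ℝ) (n : Fin m) :
    lagrangeBasis s n = Lagrange.basis Finset.univ s n := rfl

/-- Kernel triviality for the mdG matrix. -/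
lemma mdG_ker (q : ℕ) (s : Fin (q + 1) → ℝ) (hs : StrictMono s)
    (A : Matrix (Fin (q + 1)) (Fin (q + 1)) ℝ)
    (hA : ∀ m n, A m n =
      (∫ x in (0:ℝ)..1, ((lagrangeBasis s n).derivative.eval x) * (lagrangeBasis s m).eval x)
        + (lagrangeBasis s n).eval 0 * (lagrangeBasis s m).eval 0)
    (ξ : Fin (q + 1) → ℝ) (hξ : A.mulVec ξ = 0) : ξ = 0 := by
  have hinj : Set.InjOn s ↑(Finset.univ : Finset (Fin (q + 1))) := hs.injective.injOn
  set p : ℝ[X] := Lagrange.interpolate Finset.univ s ξ with hp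
  have hpdef : p = ∑ n, Polynomial.C (ξ n) * lagrangeBasis s n := by
    simp [hp, Lagrange.interpolate_apply, lagrangeBasis_eq]
  have hpeval : ∀ k, p.eval (s k) = ξ k := fun k =>
    Lagrange.eval_interpolate_at_node ξ hinj (Finset.mem_univ k)
  have hpderiv : ∀ x, p.derivative.eval x =
      ∑ n, ξ n * (lagrangeBasis s n).derivative.eval x := by
    intro x
    rw [hpdef, derivative_sum, eval_finset_sum]
    refine Finset.sum_congr rfl fun n _ => ?_
    rw [derivative_C_mul, eval_C_mul]
  have hpx : ∀ x : ℝ, p.eval x = ∑ n, ξ n * (lagrangeBasis s n).eval x := by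
    intro x
    rw [hpdef, eval_finset_sum]
    exact Finset.sum_congr rfl fun n _ => by rw [eval_C_mul]
  -- the scalar equations
  have hm : ∀ m, (∫ x in (0:ℝ)..1, p.derivative.eval x * (lagrangeBasis s m).eval x)
      + p.eval 0 * (lagrangeBasis s m).eval 0 = 0 := by
    intro m
    have h0 := congrFun hξ m
    simp only [Matrix.mulVec, dotProduct, Pi.zero_apply] at h0
    have hint : ∀ n : Fin (q + 1), IntervalIntegrable
        (fun x => (((lagrangeBasis s n).derivative.eval x) * (lagrangeBasis s m).eval x) * ξ n)
        volume 0 1 :=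
      fun n => (((Polynomial.continuous _).mul (Polynomial.continuous _)).mul
        continuous_const).intervalIntegrable 0 1
    calc (∫ x in (0:ℝ)..1, p.derivative.eval x * (lagrangeBasis s m).eval x)
          + p.eval 0 * (lagrangeBasis s m).eval 0
        = ∑ n, ((∫ x in (0:ℝ)..1,
              ((lagrangeBasis s n).derivative.eval x * (lagrangeBasis s m).eval x) * ξ n)
            + (lagrangeBasis s n).eval 0 * (lagrangeBasis s m).eval 0 * ξ n) := by
          rw [Finset.sum_add_distrib, ← intervalIntegral.integral_finset_sum (fun i _ => hint i)]
          congr 1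
          · congr 1; funext x
            rw [hpderiv x, Finset.sum_mul]
            exact Finset.sum_congr rfl fun n _ => by ring
          · rw [hpx 0, Finset.sum_mul]
            exact Finset.sum_congr rfl fun n _ => by ring
      _ = ∑ n, A m n * ξ n := by
          refine Finset.sum_congr rfl fun n _ => ?_
          rw [hA m n, add_mul]
          congr 1
          rw [intervalIntegral.integral_mul_const]
      _ = 0 := h0
  -- energy identity : ∫ p' p = p(1)²/2 - p(0)²/2
  have hed : ∀ x : ℝ, HasDerivAt (fun y => (p.eval y) ^ 2 / 2)
      (p.derivative.eval x * p.eval x) x := by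
    intro x
    have h := p.hasDerivAt x
    have h2 := (h.fun_mul h).div_const 2
    have heq : (fun y : ℝ => (p.eval y) ^ 2 / 2) = fun y => p.eval y * p.eval y / 2 := by
      funext y; ring
    rw [heq]
    exact h2.congr_deriv (by ring)
  have henergy : ∫ x in (0:ℝ)..1, p.derivative.eval x * p.eval x
      = (p.eval 1) ^ 2 / 2 - (p.eval 0) ^ 2 / 2 := by
    exact intervalIntegral.integral_eq_sub_of_hasDerivAt (fun x _ => hed x)
      (((Polynomial.continuous _).mul (Polynomial.continuous _)).intervalIntegrable 0 1)
  -- summing m-th equation times ξ m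
  have hsumeq : (∫ x in (0:ℝ)..1, p.derivative.eval x * p.eval x) + p.eval 0 * p.eval 0 = 0 := by
    have hint : ∀ m : Fin (q + 1), IntervalIntegrable
        (fun x => (p.derivative.eval x * (lagrangeBasis s m).eval x) * ξ m) volume 0 1 :=
      fun m => (((Polynomial.continuous _).mul (Polynomial.continuous _)).mul
        continuous_const).intervalIntegrable 0 1
    calc (∫ x in (0:ℝ)..1, p.derivative.eval x * p.eval x) + p.eval 0 * p.eval 0
        = ∑ m, (((∫ x in (0:ℝ)..1, p.derivative.eval x * (lagrangeBasis s m).eval x)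
            + p.eval 0 * (lagrangeBasis s m).eval 0) * ξ m) := by
          have : ∀ m : Fin (q+1), ((∫ x in (0:ℝ)..1,
                p.derivative.eval x * (lagrangeBasis s m).eval x)
              + p.eval 0 * (lagrangeBasis s m).eval 0) * ξ m
              = (∫ x in (0:ℝ)..1,
                  (p.derivative.eval x * (lagrangeBasis s m).eval x) * ξ m)
                + p.eval 0 * (lagrangeBasis s m).eval 0 * ξ m := by
            intro m
            rw [add_mul, intervalIntegral.integral_mul_const]
          simp_rw [this]
          rw [Finset.sum_add_distrib, ← intervalIntegral.integral_finset_sum (fun i _ => hint i)]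
          congr 1
          · congr 1; funext x
            rw [hpx x, Finset.mul_sum]
            exact Finset.sum_congr rfl fun m _ => by ring
          · rw [hpx 0, Finset.mul_sum]
            exact Finset.sum_congr rfl fun m _ => by ring
      _ = 0 := by
          simp_rw [fun m => hm m]
          simp
  have h01 : (p.eval 1) ^ 2 + (p.eval 0) ^ 2 = 0 := by
    rw [henergy] at hsumeq; nlinarith [sq_nonneg (p.eval 0), sq_nonneg (p.eval 1)]
  have hp0 : p.eval 0 = 0 := by nlinarith [sq_nonneg (p.eval 0), sq_nonneg (p.eval 1)]
  -- hence ∫ p' λ_m = 0 for all m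
  have hm' : ∀ m, (∫ x in (0:ℝ)..1, p.derivative.eval x * (lagrangeBasis s m).eval x) = 0 := by
    intro m; have := hm m; rw [hp0] at this; linarith
  -- p' is a combination of the λ_m
  have hdeg : p.derivative.degree < (Finset.univ : Finset (Fin (q + 1))).card := by
    refine lt_of_le_of_lt (Polynomial.degree_derivative_le) ?_
    exact Lagrange.degree_interpolate_lt _ hinj
  have hrep : p.derivative
      = ∑ m, Polynomial.C (p.derivative.eval (s m)) * lagrangeBasis s m := by
    have h := Lagrange.eq_interpolate hinj hdeg
    conv_lhs => rw [h]
    simp [Lagrange.interpolate_apply, lagrangeBasis_eq, Function.comp]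
  have hdx : ∀ x : ℝ, p.derivative.eval x
      = ∑ m, p.derivative.eval (s m) * (lagrangeBasis s m).eval x := by
    intro x
    conv_lhs => rw [hrep]
    rw [eval_finset_sum]
    exact Finset.sum_congr rfl fun m _ => by rw [eval_C_mul]
  -- ∫ (p')² = 0
  have hsq : (∫ x in (0:ℝ)..1, (p.derivative.eval x) ^ 2) = 0 := by
    have hint : ∀ m : Fin (q + 1), IntervalIntegrable
        (fun x => p.derivative.eval (s m) * (p.derivative.eval x * (lagrangeBasis s m).eval x))
        volume 0 1 :=
      fun m => (continuous_const.mul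
        ((Polynomial.continuous _).mul (Polynomial.continuous _))).intervalIntegrable 0 1
    calc (∫ x in (0:ℝ)..1, (p.derivative.eval x) ^ 2)
        = ∑ m, ∫ x in (0:ℝ)..1,
            p.derivative.eval (s m) * (p.derivative.eval x * (lagrangeBasis s m).eval x) := by
          rw [← intervalIntegral.integral_finset_sum (fun i _ => hint i)]
          congr 1; funext x
          rw [sq]
          nth_rewrite 1 [hdx x]
          rw [Finset.sum_mul]
          exact Finset.sum_congr rfl fun m _ => by ring
      _ = 0 := by
          have : ∀ m : Fin (q + 1), (∫ x in (0:ℝ)..1,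
              p.derivative.eval (s m) * (p.derivative.eval x * (lagrangeBasis s m).eval x)) = 0 := by
            intro m
            rw [intervalIntegral.integral_const_mul, hm' m, mul_zero]
          simp_rw [this]
          simp
  -- hence p' = 0
  have hpd0 : p.derivative = 0 := by
    by_contra hne
    have hroots : {x : ℝ | p.derivative.IsRoot x}.Finite := Polynomial.finite_setOf_isRoot hne
    have hInt : (∫ x in Set.Ioc (0:ℝ) 1, (p.derivative.eval x) ^ 2) = 0 := by
      rw [← intervalIntegral.integral_of_le (by norm_num : (0:ℝ) ≤ 1)]
      exact hsq
    have hnonneg : 0 ≤ fun x : ℝ => (p.derivative.eval x) ^ 2 := fun x => sq_nonneg _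
    have hInteg : IntegrableOn (fun x : ℝ => (p.derivative.eval x) ^ 2) (Set.Ioc 0 1) :=
      ((Polynomial.continuous _).pow 2).integrableOn_Ioc
    have hae := (MeasureTheory.integral_eq_zero_iff_of_nonneg
      (fun x => sq_nonneg _) hInteg).1 hInt
    have hnull : volume ({x : ℝ | (p.derivative.eval x) ^ 2 ≠ 0} ∩ Set.Ioc 0 1) = 0 := by
      have := MeasureTheory.ae_iff.1 hae
      rwa [Measure.restrict_apply₀'] at this
      · exact measurableSet_Ioc.nullMeasurableSet
    have hsub : Set.Ioc (0:ℝ) 1 ⊆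
        ({x : ℝ | (p.derivative.eval x) ^ 2 ≠ 0} ∩ Set.Ioc 0 1) ∪ {x : ℝ | p.derivative.IsRoot x} := by
      intro x hx
      by_cases h : p.derivative.eval x = 0
      · exact Or.inr h
      · exact Or.inl ⟨by simpa [pow_eq_zero_iff] using h, hx⟩
    have hle : volume (Set.Ioc (0:ℝ) 1)
        ≤ volume ({x : ℝ | (p.derivative.eval x) ^ 2 ≠ 0} ∩ Set.Ioc 0 1)
          + volume {x : ℝ | p.derivative.IsRoot x} :=
      (measure_mono hsub).trans (measure_union_le _ _)
    rw [hnull, hroots.measure_zero volume, Real.volume_Ioc] at hle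
    norm_num at hle
  -- p is constant, equal to p(0) = 0
  have hconst : p = Polynomial.C (p.coeff 0) := by
    have := Polynomial.natDegree_eq_zero_of_derivative_eq_zero hpd0
    exact (Polynomial.eq_C_of_natDegree_eq_zero this)
  have hpz : p = 0 := by
    have h := hp0
    rw [hconst] at h ⊢
    simp at h
    simp [h]
  funext k
  have := hpeval k
  rw [hpz] at this
  simpa using this.symm

theorem mdG_matrix_simplification
    (q : ℕ)
    (s : Fin (q + 1) → ℝ) (hs : StrictMono s)
    (hmem : ∀ n, s n ∈ Set.Icc (0:ℝ) 1) (hsq : s (Fin.last q) = 1)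
    (A : Matrix (Fin (q + 1)) (Fin (q + 1)) ℝ)
    (hA : ∀ m n, A m n =
      (∫ x in (0:ℝ)..1, ((lagrangeBasis s n).derivative.eval x) * (lagrangeBasis s m).eval x)
        + (lagrangeBasis s n).eval 0 * (lagrangeBasis s m).eval 0) :
    IsUnit A ∧ ∀ m : Fin (q + 1),
      (∑ n : Fin (q + 1), A⁻¹ m n * (lagrangeBasis s n).eval 0) = 1 := by
  have hinj : Set.InjOn s ↑(Finset.univ : Finset (Fin (q + 1))) := hs.injective.injOn
  have hdet : A.det ≠ 0 := by
    intro h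
    obtain ⟨v, hv0, hv⟩ := (Matrix.exists_mulVec_eq_zero_iff).2 h
    exact hv0 (mdG_ker q s hs A hA v hv)
  have hunit : IsUnit A := (Matrix.isUnit_iff_isUnit_det A).2 (isUnit_iff_ne_zero.2 hdet)
  refine ⟨hunit, ?_⟩
  -- partition of unity
  have hsum : ∑ n, lagrangeBasis s n = 1 := by
    simp_rw [lagrangeBasis_eq]
    exact Lagrange.sum_basis hinj Finset.univ_nonempty
  -- A · 𝟙 = (λ_n(0))_n
  have hAone : A.mulVec (fun _ => 1) = fun m => (lagrangeBasis s m).eval 0 := by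
    funext m
    simp only [Matrix.mulVec, dotProduct, mul_one]
    have hint : ∀ n : Fin (q + 1), IntervalIntegrable
        (fun x => ((lagrangeBasis s n).derivative.eval x) * (lagrangeBasis s m).eval x)
        volume 0 1 :=
      fun n => ((Polynomial.continuous _).mul (Polynomial.continuous _)).intervalIntegrable 0 1
    calc ∑ n, A m n
        = (∫ x in (0:ℝ)..1,
            ∑ n, ((lagrangeBasis s n).derivative.eval x) * (lagrangeBasis s m).eval x)
          + ∑ n, (lagrangeBasis s n).eval 0 * (lagrangeBasis s m).eval 0 := by
          simp_rw [hA m]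
          rw [Finset.sum_add_distrib, intervalIntegral.integral_finset_sum (fun i _ => hint i)]
      _ = (lagrangeBasis s m).eval 0 := by
          have h1 : ∀ x : ℝ, ∑ n, ((lagrangeBasis s n).derivative.eval x)
              * (lagrangeBasis s m).eval x = 0 := by
            intro x
            rw [← Finset.sum_mul]
            have : ∑ n, (lagrangeBasis s n).derivative.eval x
                = ((∑ n, lagrangeBasis s n).derivative).eval x := by
              rw [derivative_sum, eval_finset_sum]
            rw [this, hsum]
            simp
          have h2 : ∑ n, (lagrangeBasis s n).eval 0 * (lagrangeBasis s m).eval 0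
              = (lagrangeBasis s m).eval 0 := by
            rw [← Finset.sum_mul, ← eval_finset_sum, hsum]
            simp
          simp_rw [h1, h2]
          simp
  -- conclude
  intro m
  have hinv : A⁻¹.mulVec (fun n => (lagrangeBasis s n).eval 0) = fun _ => (1:ℝ) := by
    rw [← hAone, Matrix.mulVec_mulVec, Matrix.nonsing_inv_mul A (isUnit_iff_ne_zero.2 hdet)]
    funext k
    simp [Matrix.mulVec, dotProduct, Matrix.one_apply]
  have := congrFun hinv m
  simpa [Matrix.mulVec, dotProduct] using this
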